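/- Let K be a field of characteristic 2, complete with respect to a discrete valuation v : Kˣ → ℤ, with finite residue field 𝔽. Let γ be a unit of the valuation ring whose residue γ̄ ∈ 𝔽 makes X² + X + γ̄ irreducible in 𝔽[X]. Then for every c ∈ Kˣ, there exist y, z ∈ K with y² + y·z + γ·z² = c if and only if v(c) is even. -/

import Mathlib

open Polynomial

namespace ASAux

local notation "Γ" => WithZero (Multiplicative ℤ)

lemma exists_ofAdd {x : Γ} (hx : x ≠ 0) :
    ∃ m : ℤ, x = ((Multiplicative.ofAdd m : Multiplicative ℤ) : Γ) := by
  obtain ⟨a, rfl⟩ := WithZero.ne_zero_iff_exists.mp hx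
  exact ⟨Multiplicative.toAdd a, by simp⟩

lemma le_ofAdd_neg_one {x : Γ} (hx : x < 1) :
    x ≤ ((Multiplicative.ofAdd (-1:ℤ) : Multiplicative ℤ) : Γ) := by
  rcases eq_or_ne x 0 with rfl|h
  · exact zero_le'
  · obtain ⟨a, rfl⟩ := WithZero.ne_zero_iff_exists.mp h
    rw [← WithZero.coe_one, WithZero.coe_lt_coe] at hx
    rw [WithZero.coe_le_coe]
    have h1 : Multiplicative.toAdd a < Multiplicative.toAdd (1 : Multiplicative ℤ) :=
      Multiplicative.toAdd_lt.mpr hx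
    simp only [toAdd_one] at h1
    have h2 : Multiplicative.toAdd a ≤ -1 := by omega
    calc a = Multiplicative.ofAdd (Multiplicative.toAdd a) := (ofAdd_toAdd a).symm
    _ ≤ Multiplicative.ofAdd (-1) := Multiplicative.ofAdd_le.mpr h2

lemma ofAdd_pow (k : ℕ) :
    ((Multiplicative.ofAdd (-1:ℤ) : Multiplicative ℤ) : Γ)^k
      = ((Multiplicative.ofAdd (-(k:ℤ)) : Multiplicative ℤ) : Γ) := by
  rw [← WithZero.coe_pow]
  congr 1
  induction k with
  | zero => simp
  | succ n ih =>
    rw [pow_succ, ih, ← ofAdd_add]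
    congr 1; push_cast; ring

lemma ofAdd_mul_ofAdd (a b : ℤ) :
    ((Multiplicative.ofAdd a : Multiplicative ℤ) : Γ) * (Multiplicative.ofAdd b : Multiplicative ℤ)
      = ((Multiplicative.ofAdd (a + b) : Multiplicative ℤ) : Γ) := by
  rw [← WithZero.coe_mul, ← ofAdd_add]

lemma ofAdd_le_ofAdd {a b : ℤ} (h : a ≤ b) :
    ((Multiplicative.ofAdd a : Multiplicative ℤ) : Γ)
      ≤ ((Multiplicative.ofAdd b : Multiplicative ℤ) : Γ) :=
  WithZero.coe_le_coe.mpr (Multiplicative.ofAdd_le.mpr h)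

lemma ofAdd_lt_ofAdd {a b : ℤ} (h : a < b) :
    ((Multiplicative.ofAdd a : Multiplicative ℤ) : Γ)
      < ((Multiplicative.ofAdd b : Multiplicative ℤ) : Γ) :=
  WithZero.coe_lt_coe.mpr (Multiplicative.ofAdd_lt.mpr h)

/-- δ = ofAdd (-1) -/
noncomputable def δ : Γ := ((Multiplicative.ofAdd (-1:ℤ) : Multiplicative ℤ) : Γ)

lemma δ_pow_anti {j k : ℕ} (h : j ≤ k) : δ^k ≤ δ^j := by
  rw [δ, ofAdd_pow, ofAdd_pow]
  exact ofAdd_le_ofAdd (by omega)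

lemma δ_pow_eventually_lt (g : Γˣ) : ∃ N : ℕ, ∀ n ≥ N, δ^(n+1) < (g : Γ) := by
  obtain ⟨m, hm⟩ := exists_ofAdd (g.ne_zero)
  refine ⟨(-m).toNat, fun n hn => ?_⟩
  rw [δ, ofAdd_pow, hm]
  exact ofAdd_lt_ofAdd (by omega)

section Field

variable {K : Type*} [Field K] [vK : Valued K Γ]

theorem isUnit_iff_val_one (x : vK.v.valuationSubring) : IsUnit x ↔ Valued.v (x : K) = 1 := by
  constructor
  · rintro ⟨u, rfl⟩
    have h1 : Valued.v ((u : vK.v.valuationSubring) : K) ≤ 1 := (u : vK.v.valuationSubring).2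
    have h2 : Valued.v (((u⁻¹ : _) : vK.v.valuationSubring) : K) ≤ 1 :=
      ((u⁻¹:_) : vK.v.valuationSubring).2
    have h3 : Valued.v ((u : vK.v.valuationSubring) : K)
        * Valued.v (((u⁻¹:_) : vK.v.valuationSubring) : K) = 1 := by
      rw [← map_mul]
      norm_cast
      simp
    refine le_antisymm h1 ?_
    calc (1:Γ) = _ := h3.symm
    _ ≤ Valued.v ((u : vK.v.valuationSubring) : K) * 1 := mul_le_mul_right h2 _
    _ = _ := mul_one _
  · intro hx
    have hinv : Valued.v ((x : K)⁻¹) ≤ 1 := by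
      rw [map_inv₀, hx]; norm_num
    have hx0 : (x : K) ≠ 0 := by
      intro h; rw [h] at hx; simp at hx
    refine IsUnit.of_mul_eq_one (M := vK.v.valuationSubring) (a := x) ⟨(x:K)⁻¹, hinv⟩ ?_
    ext
    push_cast
    field_simp

theorem residue_zero_iff (x : vK.v.valuationSubring) :
    IsLocalRing.residue vK.v.valuationSubring x = 0 ↔ Valued.v (x : K) < 1 := by
  rw [IsLocalRing.residue_eq_zero_iff, IsLocalRing.mem_maximalIdeal,
    mem_nonunits_iff, isUnit_iff_val_one]
  exact (lt_iff_le_and_ne.trans (and_iff_right x.2)).symm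

/-- irreducibility of `X² + X + γ̄` forces units `w` to have `v (w² + w + γ) = 1`. -/
theorem val_quad_eq_one (γ : vK.v.valuationSubring)
    (hirr : Irreducible
      (X ^ 2 + X + C (IsLocalRing.residue vK.v.valuationSubring γ)))
    {w : K} (hw : Valued.v w = 1) : Valued.v (w^2 + w + (γ:K)) = 1 := by
  have hwO : w ∈ vK.v.valuationSubring := le_of_eq hw
  set W : vK.v.valuationSubring := ⟨w, hwO⟩ with hW
  have hsO : w^2 + w + (γ:K) = ((W^2 + W + γ : vK.v.valuationSubring) : K) := by push_cast; ring
  have hle : Valued.v (w^2 + w + (γ:K)) ≤ 1 := by rw [hsO]; exact (W^2 + W + γ : vK.v.valuationSubring).2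
  rcases lt_or_eq_of_le hle with hlt | h
  · exfalso
    have h0 : IsLocalRing.residue vK.v.valuationSubring (W^2 + W + γ) = 0 := by
      rw [residue_zero_iff, ← hsO]; exact hlt
    set r := IsLocalRing.residue vK.v.valuationSubring W with hr
    have hroot : (X ^ 2 + X + C (IsLocalRing.residue vK.v.valuationSubring γ)).IsRoot r := by
      simp only [Polynomial.IsRoot, eval_add, eval_pow, eval_X, eval_C]
      simpa only [map_add, map_pow] using h0
    obtain ⟨q, hq⟩ := (dvd_iff_isRoot).mpr hroot
    have hdeg : (X ^ 2 + X + C (IsLocalRing.residue vK.v.valuationSubring γ)).natDegree = 2 := by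
      compute_degree!
    rcases hirr.isUnit_or_isUnit hq with hu | hu
    · exact (Polynomial.not_isUnit_X_sub_C r) hu
    · have hq0 : q ≠ 0 := hu.ne_zero
      have : (2:ℕ) = 1 := by
        rw [← hdeg, hq, Polynomial.natDegree_mul (Polynomial.X_sub_C_ne_zero r) hq0,
          Polynomial.natDegree_X_sub_C, Polynomial.natDegree_eq_zero_of_isUnit hu]
      omega
  · exact h

end Field

/-- square roots exist in a finite field of characteristic two. -/
theorem sq_surj {F : Type*} [Field F] [Finite F] (h2 : (2:F) = 0) (a : F) :
    ∃ r : F, r^2 = a := by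
  have hinj : Function.Injective (fun x : F => x^2) := by
    intro x y hxy
    simp only at hxy
    have h3 : (x - y)^2 = 0 := by linear_combination hxy + (y^2 - x*y) * h2
    have := pow_eq_zero_iff (n := 2) (by norm_num) |>.mp h3
    exact sub_eq_zero.mp this
  exact Finite.injective_iff_surjective.mp hinj a

end ASAux

open ASAux

section UnitCase

variable {K : Type*} [Field K] [CharP K 2] [vK : Valued K (WithZero (Multiplicative ℤ))]
  [CompleteSpace K]

local notation "Γ" => WithZero (Multiplicative ℤ)

theorem represents_unit
    [Finite (IsLocalRing.ResidueField vK.v.valuationSubring)]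
    (γ : vK.v.valuationSubring)
    (hirr : Irreducible
      (X ^ 2 + X + C (IsLocalRing.residue vK.v.valuationSubring γ)))
    (c : K) (hc : Valued.v c = 1) :
    ∃ y z : K, y ^ 2 + y * z + (γ : K) * z ^ 2 = c := by
  classical
  have h2K : (2:K) = 0 := by exact_mod_cast CharP.cast_eq_zero K 2
  have h2O : (2 : vK.v.valuationSubring) = 0 := by
    apply Subtype.coe_injective
    push_cast
    exact h2K
  have h2F : (2 : IsLocalRing.ResidueField vK.v.valuationSubring) = 0 := by
    rw [← map_ofNat (IsLocalRing.residue vK.v.valuationSubring) 2, h2O, map_zero]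
  have hcO : c ∈ vK.v.valuationSubring := le_of_eq hc
  set C' : vK.v.valuationSubring := ⟨c, hcO⟩ with hC'
  obtain ⟨r, hr⟩ := sq_surj h2F (IsLocalRing.residue vK.v.valuationSubring C')
  have hCne : IsLocalRing.residue vK.v.valuationSubring C' ≠ 0 := by
    rw [Ne, residue_zero_iff]
    exact not_lt.mpr (le_of_eq hc.symm)
  have hrne : r ≠ 0 := by
    intro h; rw [h] at hr; simp at hr; exact hCne hr.symm
  obtain ⟨Y₀, hY₀⟩ := Ideal.Quotient.mk_surjective (I := IsLocalRing.maximalIdeal vK.v.valuationSubring) r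
  have hY₀r : IsLocalRing.residue vK.v.valuationSubring Y₀ = r := hY₀
  set y₀ : K := (Y₀ : K) with hy₀def
  have hy₀ : Valued.v y₀ = 1 := by
    rcases lt_or_eq_of_le (show Valued.v ((Y₀:K)) ≤ 1 from Y₀.2) with hlt | h
    · exact absurd ((residue_zero_iff Y₀).mpr hlt) (hY₀r ▸ hrne)
    · exact h
  have hy₀ne : y₀ ≠ 0 := by
    intro h; rw [h] at hy₀; simp at hy₀
  set i : K := y₀⁻¹ with hidef
  have hi : y₀ * i = 1 := mul_inv_cancel₀ hy₀ne
  have hvi : Valued.v i = 1 := by rw [hidef, map_inv₀, hy₀]; norm_num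
  set f : K → K := fun t => (γ:K) * t^2 + y₀ * t + (y₀^2 - c) with hf
  set g : K → K := fun t => t + i * f t with hg
  set z : ℕ → K := fun n => g^[n] 0 with hz
  have hzsucc : ∀ n, z (n+1) = z n + i * f (z n) := by
    intro n
    show g^[n+1] 0 = g^[n] 0 + i * f (g^[n] 0)
    rw [Function.iterate_succ_apply']
  -- the Newton step identity
  have hkey : ∀ t : K, f (t + i * f t) = (γ:K) * i^2 * (f t)^2 := by
    intro t
    simp only [hf]
    linear_combination (((γ:K) * t^2 + y₀ * t + (y₀^2 - c))
        + (γ:K) * t * i * ((γ:K) * t^2 + y₀ * t + (y₀^2 - c))) * h2K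
      + ((γ:K) * t^2 + y₀ * t + (y₀^2 - c)) * hi
  -- value of γ
  have hγ1 : Valued.v ((γ:K)) ≤ 1 := γ.2
  -- initial bound
  have hstart : Valued.v (f (z 0)) < 1 := by
    have hz0 : z 0 = 0 := rfl
    have : f (z 0) = ((Y₀^2 - C' : vK.v.valuationSubring) : K) := by
      rw [hz0]; simp only [hf]; push_cast; ring
    rw [this, ← residue_zero_iff]
    rw [map_sub, map_pow, hY₀r, hr, sub_self]
  have hvf : ∀ n, Valued.v (f (z n)) ≤ δ^(n+1) := by
    intro n
    induction n with
    | zero => simpa [δ] using le_ofAdd_neg_one hstart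
    | succ n ih =>
      have h1 : Valued.v (f (z (n+1))) = Valued.v ((γ:K)) * (Valued.v i)^2 * (Valued.v (f (z n)))^2 := by
        rw [hzsucc, hkey, map_mul, map_mul, map_pow, map_pow]
      rw [h1, hvi]
      have h2 : Valued.v ((γ:K)) * 1^2 * (Valued.v (f (z n)))^2 ≤ (Valued.v (f (z n)))^2 := by
        rw [one_pow, mul_one]
        calc Valued.v ((γ:K)) * (Valued.v (f (z n)))^2 ≤ 1 * (Valued.v (f (z n)))^2 :=
          mul_le_mul_left hγ1 _
        _ = _ := one_mul _
      refine le_trans h2 (le_trans ?_ (δ_pow_anti (by omega : n+2 ≤ 2*(n+1))))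
      calc (Valued.v (f (z n)))^2 ≤ (δ^(n+1))^2 := pow_le_pow_left' ih 2
      _ = δ^(2*(n+1)) := by rw [← pow_mul, mul_comm]
  have hzdiff : ∀ n, Valued.v (z (n+1) - z n) ≤ δ^(n+1) := by
    intro n
    rw [hzsucc, add_sub_cancel_left, map_mul, hvi, one_mul]
    exact hvf n
  have htel : ∀ n m, Valued.v (z (n+m) - z n) ≤ δ^(n+1) := by
    intro n m
    induction m with
    | zero => simp
    | succ m ih =>
      have : z (n+(m+1)) - z n = (z (n+m+1) - z (n+m)) + (z (n+m) - z n) := by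
        rw [show n+(m+1) = n+m+1 from rfl]; ring
      rw [this]
      refine le_trans (vK.v.map_add _ _) (max_le ?_ ih)
      exact le_trans (hzdiff (n+m)) (δ_pow_anti (by omega))
  have hcauchy : CauchySeq z := by
    rw [(Valued.hasBasis_uniformity K Γ).cauchySeq_iff]
    rintro g -
    obtain ⟨N, hN⟩ := δ_pow_eventually_lt (Units.map (MonoidWithZeroHom.ValueGroup₀.embedding).toMonoidHom g)
    refine ⟨N, fun m hm n hn => ?_⟩
    simp only [Set.mem_setOf_eq, Valuation.restrict_lt_iff_lt_embedding]
    rcases le_total m n with h | h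
    · obtain ⟨d, rfl⟩ := Nat.exists_eq_add_of_le h
      exact lt_of_le_of_lt (htel m d) (hN m hm)
    · rw [vK.v.map_sub_swap]
      obtain ⟨d, rfl⟩ := Nat.exists_eq_add_of_le h
      exact lt_of_le_of_lt (htel n d) (hN n hn)
  obtain ⟨L, hL⟩ := cauchySeq_tendsto_of_complete hcauchy
  have hcont : Continuous f := by
    simp only [hf]
    fun_prop
  have hfL : Filter.Tendsto (fun n => f (z n)) Filter.atTop (nhds (f L)) :=
    (hcont.tendsto L).comp hL
  have hf0 : Filter.Tendsto (fun n => f (z n)) Filter.atTop (nhds 0) := by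
    rw [(Valued.hasBasis_nhds_zero K Γ).tendsto_right_iff]
    rintro g -
    obtain ⟨N, hN⟩ := δ_pow_eventually_lt (Units.map (MonoidWithZeroHom.ValueGroup₀.embedding).toMonoidHom g)
    filter_upwards [Filter.eventually_ge_atTop N] with n hn
    exact (Valuation.restrict_lt_iff_lt_embedding vK.v).mpr (lt_of_le_of_lt (hvf n) (hN n hn))
  have hfL0 : f L = 0 := tendsto_nhds_unique hfL hf0
  refine ⟨y₀, L, ?_⟩
  have : (γ:K) * L^2 + y₀ * L + (y₀^2 - c) = 0 := hfL0
  linear_combination this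

end UnitCase

theorem artinSchreier_norm_form_represents_iff_even_val
    (K : Type*) [Field K] [CharP K 2] [vK : Valued K (WithZero (Multiplicative ℤ))]
    [CompleteSpace K]
    (hsurj : Function.Surjective (vK.v : K → WithZero (Multiplicative ℤ)))
    [Finite (IsLocalRing.ResidueField vK.v.valuationSubring)]
    (γ : vK.v.valuationSubring) (hγunit : Valued.v (γ : K) = 1)
    (hirr : Irreducible
      (X ^ 2 + X + C (IsLocalRing.residue vK.v.valuationSubring γ))) :
    ∀ c : K, c ≠ 0 →
      ((∃ y z : K, y ^ 2 + y * z + (γ : K) * z ^ 2 = c) ↔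
        ∃ m : ℤ, Valued.v c = ((Multiplicative.ofAdd m : Multiplicative ℤ) :
          WithZero (Multiplicative ℤ)) ∧ Even m) := by
  intro c hc0
  constructor
  · rintro ⟨y, z, hQ⟩
    have key : ∃ u : K, u ≠ 0 ∧ Valued.v c = Valued.v u * Valued.v u := by
      by_cases hz : z = 0
      · subst hz
        have hcy : c = y^2 := by linear_combination -hQ
        have hy0 : y ≠ 0 := by rintro rfl; simp [hcy] at hc0
        exact ⟨y, hy0, by rw [hcy, map_pow, sq]⟩
      · set w : K := y / z with hw
        have hexp : z^2 * (w^2 + w + (γ:K)) = y^2 + y*z + (γ:K)*z^2 := by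
          rw [hw]; field_simp
        have hc' : c = z^2 * (w^2 + w + (γ:K)) := by rw [hexp, hQ]
        rcases lt_trichotomy (Valued.v w) 1 with hlt | heq | hgt
        · have hsum : Valued.v (w^2 + w) < 1 := by
            refine lt_of_le_of_lt (vK.v.map_add _ _) (max_lt ?_ hlt)
            rw [map_pow, sq]
            calc Valued.v w * Valued.v w ≤ 1 * Valued.v w := mul_le_mul_left hlt.le _
            _ = Valued.v w := one_mul _
            _ < 1 := hlt
          have h1 : Valued.v (w^2 + w + (γ:K)) = 1 := by
            rw [vK.v.map_add_of_distinct_val (by rw [hγunit]; exact hsum.ne), hγunit]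
            exact max_eq_right hsum.le
          refine ⟨z, hz, ?_⟩
          rw [hc', map_mul, h1, mul_one, map_pow, sq]
        · refine ⟨z, hz, ?_⟩
          rw [hc', map_mul, val_quad_eq_one γ hirr heq, mul_one, map_pow, sq]
        · have hwne : Valued.v w ≠ 0 := ne_of_gt (lt_trans zero_lt_one hgt)
          obtain ⟨m, hm⟩ := exists_ofAdd hwne
          have hm0 : (0:ℤ) < m := by
            have := hgt
            rw [hm, ← WithZero.coe_one, WithZero.coe_lt_coe, ← ofAdd_zero,
              Multiplicative.ofAdd_lt] at this
            exact this
          have hww : Valued.v w < Valued.v (w^2) := by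
            rw [map_pow, sq, hm, ofAdd_mul_ofAdd]
            exact ofAdd_lt_ofAdd (by omega)
          have hwγ : Valued.v (w + (γ:K)) < Valued.v (w^2) := by
            refine lt_of_le_of_lt (le_trans (vK.v.map_add _ _) ?_) hww
            rw [hγunit]
            exact max_le le_rfl hgt.le
          have h1 : Valued.v (w^2 + w + (γ:K)) = Valued.v (w^2) := by
            rw [add_assoc, vK.v.map_add_of_distinct_val (ne_of_gt hwγ)]
            exact max_eq_left hwγ.le
          have hyne : y ≠ 0 := by
            rintro rfl
            rw [hw] at hwne
            simp at hwne
          refine ⟨y, hyne, ?_⟩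
          have hyzw : y = w * z := by rw [hw]; field_simp
          rw [hc', map_mul, h1, hyzw, map_mul, map_pow, map_pow, sq, sq]
          exact (mul_comm _ _).trans (mul_mul_mul_comm _ _ _ _).symm
    obtain ⟨u, hu0, hvc⟩ := key
    have hvune : Valued.v u ≠ 0 := by
      simpa using hu0
    obtain ⟨m, hm⟩ := exists_ofAdd hvune
    exact ⟨m + m, by rw [hvc, hm, ofAdd_mul_ofAdd], ⟨m, rfl⟩⟩
  · rintro ⟨m, hm, k, hk⟩
    obtain ⟨t, ht⟩ := hsurj ((Multiplicative.ofAdd k : Multiplicative ℤ) : WithZero (Multiplicative ℤ))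
    have htne : t ≠ 0 := by
      rintro rfl
      rw [map_zero] at ht
      exact (WithZero.coe_ne_zero ht.symm)
    have hvc' : Valued.v (c / t^2) = 1 := by
      rw [map_div₀, map_pow, hm, ht, sq, ofAdd_mul_ofAdd, hk]
      exact div_self (WithZero.coe_ne_zero)
    obtain ⟨y, z, hQ⟩ := represents_unit γ hirr (c / t^2) hvc'
    refine ⟨t * y, t * z, ?_⟩
    have h2 : t^2 * (c / t^2) = c := by field_simp
    linear_combination t^2 * hQ + h2
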